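/- arXiv:1602.02527 — 5 statements merged into one kernel-verified Lean document; each statement's English description precedes it below -/
import Mathlib

section
/- If a cost-minimization game with continuously differentiable costs is (λ, μ)-locally smooth with λ > 0 and μ < 1, then for any pure Nash equilibrium z and any profile o, C(z) ≤ (λ/(1-μ))·C(o). -/
theorem local_smooth_poa (n : ℕ) (C : Fin n → (Fin n → ℝ) → ℝ)
    (lam mu : ℝ) (hlam : 0 < lam) (hmu : mu < 1)
    (hsmooth : ∀ o z : Fin n → ℝ,
      ∑ i, (C i z + (o i - z i) * deriv (fun t => C i (Function.update z i t)) (z i))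
        ≤ lam * ∑ i, C i o + mu * ∑ i, C i z)
    (z o : Fin n → ℝ)
    (hnash : ∀ i, deriv (fun t => C i (Function.update z i t)) (z i) = 0)
    (hCo : 0 ≤ ∑ i, C i o) (hCz : 0 ≤ ∑ i, C i z) :
    ∑ i, C i z ≤ (lam / (1 - mu)) * ∑ i, C i o := by
  have h := hsmooth o z
  simp only [hnash, mul_zero, add_zero] at h
  rw [div_mul_eq_mul_div, le_div_iff₀ (by linarith)]
  linarith
end

section
/- Let ε > 0 and let (w_{ij}) be nonnegative weights on n nodes satisfying Σ_{j≠i} w_{ji} ≤ (1/(1+ε))·(w_{ii} + Σ_{j≠i} w_{ij}) for every i. Then the opinion formation game with costs C_i(z) = w_{ii}(z_i - s_i)² + Σ_{j≠i} w_{ij}(z_i - z_j)² is (1 + 1/ε, 0)-locally smooth: for all profiles o, z, Σ_i (C_i(z) + (o_i - z_i)·∂C_i/∂z_i(z)) ≤ (1 + 1/ε)·C(o). -/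
open Finset

/-- Individual cost in the opinion formation game. -/
def opCost (n : ℕ) (w : Fin n → Fin n → ℝ) (s : Fin n → ℝ) (i : Fin n)
    (z : Fin n → ℝ) : ℝ :=
  w i i * (z i - s i) ^ 2 + ∑ j ∈ Finset.univ.erase i, w i j * (z i - z j) ^ 2

lemma opCost_deriv (n : ℕ) (w : Fin n → Fin n → ℝ) (s : Fin n → ℝ) (i : Fin n)
    (z : Fin n → ℝ) :
    deriv (fun t => opCost n w s i (Function.update z i t)) (z i)
      = 2 * w i i * (z i - s i) + ∑ j ∈ Finset.univ.erase i, 2 * w i j * (z i - z j) := by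
  have hfun : (fun t => opCost n w s i (Function.update z i t))
      = fun t => w i i * (t - s i) ^ 2 + ∑ j ∈ Finset.univ.erase i, w i j * (t - z j) ^ 2 := by
    funext t
    unfold opCost
    rw [Function.update_self]
    congr 1
    refine Finset.sum_congr rfl fun j hj => ?_
    rw [Function.update_of_ne (Finset.ne_of_mem_erase hj)]
  rw [hfun]
  have h1 : HasDerivAt
      (fun t => w i i * (t - s i) ^ 2 + ∑ j ∈ Finset.univ.erase i, w i j * (t - z j) ^ 2)
      (2 * w i i * (z i - s i) + ∑ j ∈ Finset.univ.erase i, 2 * w i j * (z i - z j)) (z i) := by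
    apply HasDerivAt.add
    · have h := (((hasDerivAt_id (z i)).sub_const (s i)).pow 2).const_mul (w i i)
      convert h using 1
      · rfl
      all_goals norm_num [Pi.pow_apply]
      ring
    · apply HasDerivAt.fun_sum
      intro j _
      have h := (((hasDerivAt_id (z i)).sub_const (z j)).pow 2).const_mul (w i j)
      convert h using 1
      · rfl
      all_goals norm_num [Pi.pow_apply]
      ring
  exact h1.deriv

lemma sum_erase_comm {n : ℕ} (g : Fin n → Fin n → ℝ) :
    ∑ i, ∑ j ∈ Finset.univ.erase i, g i j = ∑ j, ∑ i ∈ Finset.univ.erase j, g i j := by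
  have h : ∀ (f : Fin n → Fin n → ℝ) (i : Fin n),
      ∑ j ∈ Finset.univ.erase i, f i j = ∑ j, if j ≠ i then f i j else 0 := by
    intro f i
    rw [← Finset.sum_filter, Finset.filter_ne']
  have h2 : ∀ j : Fin n, ∑ i ∈ Finset.univ.erase j, g i j
      = ∑ i, if i ≠ j then g i j else 0 := fun j => h (fun a b => g b a) j
  simp_rw [h g, h2]
  rw [Finset.sum_comm]
  refine Finset.sum_congr rfl fun j _ => Finset.sum_congr rfl fun i _ => ?_
  simp only [ne_comm]

theorem local_smoothness_of_condition (n : ℕ) (w : Fin n → Fin n → ℝ)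
    (hw : ∀ i j, 0 ≤ w i j) (ε : ℝ) (hε : 0 < ε)
    (hcond : ∀ i : Fin n, ∑ j ∈ Finset.univ.erase i, w j i
        ≤ (1 / (1 + ε)) * (w i i + ∑ j ∈ Finset.univ.erase i, w i j))
    (s : Fin n → ℝ) (o z : Fin n → ℝ) :
    ∑ i, (opCost n w s i z
        + (o i - z i) * deriv (fun t => opCost n w s i (Function.update z i t)) (z i))
      ≤ (1 + 1 / ε) * ∑ i, opCost n w s i o := by
  have hε1 : (0:ℝ) < 1 + ε := by linarith
  have hinv : ε * (1/ε) = 1 := mul_one_div_cancel hε.ne'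
  have key : ∀ i : Fin n,
      opCost n w s i z
        + (o i - z i) * deriv (fun t => opCost n w s i (Function.update z i t)) (z i)
      = w i i * ((o i - s i) ^ 2 - (o i - z i) ^ 2)
        + (∑ j ∈ Finset.univ.erase i, w i j * (o i - z j) ^ 2
           - ∑ j ∈ Finset.univ.erase i, w i j * (o i - z i) ^ 2) := by
    intro i
    rw [opCost_deriv]
    unfold opCost
    have hsum : ∑ j ∈ Finset.univ.erase i, w i j * (z i - z j) ^ 2
        + (o i - z i) * ∑ j ∈ Finset.univ.erase i, 2 * w i j * (z i - z j)
        = ∑ j ∈ Finset.univ.erase i, w i j * (o i - z j) ^ 2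
          - ∑ j ∈ Finset.univ.erase i, w i j * (o i - z i) ^ 2 := by
      rw [Finset.mul_sum, ← Finset.sum_add_distrib, ← Finset.sum_sub_distrib]
      exact Finset.sum_congr rfl fun j _ => by ring
    linear_combination hsum
  have expand : ∑ i, (opCost n w s i z
        + (o i - z i) * deriv (fun t => opCost n w s i (Function.update z i t)) (z i))
      = (∑ i, w i i * (o i - s i) ^ 2) - (∑ i, w i i * (o i - z i) ^ 2)
        + ((∑ i, ∑ j ∈ Finset.univ.erase i, w i j * (o i - z j) ^ 2)
           - (∑ i, ∑ j ∈ Finset.univ.erase i, w i j * (o i - z i) ^ 2)) := by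
    rw [Finset.sum_congr rfl fun i _ => key i, Finset.sum_add_distrib,
      Finset.sum_sub_distrib]
    congr 1
    simp_rw [mul_sub]
    rw [Finset.sum_sub_distrib]
  have hX : (∑ i, ∑ j ∈ Finset.univ.erase i, w i j * (o i - z j) ^ 2)
      ≤ (1 + 1/ε) * (∑ i, ∑ j ∈ Finset.univ.erase i, w i j * (o i - o j) ^ 2)
        + (1 + ε) * (∑ i, ∑ j ∈ Finset.univ.erase i, w i j * (o j - z j) ^ 2) := by
    have hpt : ∀ i j : Fin n, w i j * (o i - z j) ^ 2
        ≤ (1 + 1/ε) * (w i j * (o i - o j) ^ 2) + (1 + ε) * (w i j * (o j - z j) ^ 2) := by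
      intro i j
      have hsq : (o i - z j) ^ 2
          ≤ (1 + 1/ε) * (o i - o j) ^ 2 + (1 + ε) * (o j - z j) ^ 2 := by
        nlinarith [mul_nonneg (one_div_pos.mpr hε).le
          (sq_nonneg ((o i - o j) - ε * (o j - z j))), hinv, hε.le]
      calc w i j * (o i - z j) ^ 2
          ≤ w i j * ((1 + 1/ε) * (o i - o j) ^ 2 + (1 + ε) * (o j - z j) ^ 2) :=
            mul_le_mul_of_nonneg_left hsq (hw i j)
        _ = (1 + 1/ε) * (w i j * (o i - o j) ^ 2) + (1 + ε) * (w i j * (o j - z j) ^ 2) := by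
            ring
    calc (∑ i, ∑ j ∈ Finset.univ.erase i, w i j * (o i - z j) ^ 2)
        ≤ ∑ i, ∑ j ∈ Finset.univ.erase i,
            ((1 + 1/ε) * (w i j * (o i - o j) ^ 2) + (1 + ε) * (w i j * (o j - z j) ^ 2)) :=
          Finset.sum_le_sum fun i _ => Finset.sum_le_sum fun j _ => hpt i j
      _ = _ := by
          simp_rw [Finset.sum_add_distrib, ← Finset.mul_sum]
  have hG : (∑ i, ∑ j ∈ Finset.univ.erase i, w i j * (o j - z j) ^ 2)
      = ∑ j, (∑ i ∈ Finset.univ.erase j, w i j) * (o j - z j) ^ 2 := by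
    rw [sum_erase_comm (fun i j => w i j * (o j - z j) ^ 2)]
    exact Finset.sum_congr rfl fun j _ => by rw [← Finset.sum_mul]
  have hGB : (1 + ε) * (∑ i, ∑ j ∈ Finset.univ.erase i, w i j * (o j - z j) ^ 2)
      ≤ (∑ i, w i i * (o i - z i) ^ 2)
        + (∑ i, ∑ j ∈ Finset.univ.erase i, w i j * (o i - z i) ^ 2) := by
    rw [hG, Finset.mul_sum]
    have hBF : ∑ j, (w j j + ∑ i ∈ Finset.univ.erase j, w j i) * (o j - z j) ^ 2
        = (∑ i, w i i * (o i - z i) ^ 2)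
          + (∑ i, ∑ j ∈ Finset.univ.erase i, w i j * (o i - z i) ^ 2) := by
      simp_rw [add_mul, Finset.sum_mul]
      rw [Finset.sum_add_distrib]
    rw [← hBF]
    refine Finset.sum_le_sum fun j _ => ?_
    have h1 : (∑ i ∈ Finset.univ.erase j, w i j) * (o j - z j) ^ 2
        ≤ (1 / (1 + ε)) * (w j j + ∑ i ∈ Finset.univ.erase j, w j i) * (o j - z j) ^ 2 :=
      mul_le_mul_of_nonneg_right (hcond j) (sq_nonneg _)
    have h2 := mul_le_mul_of_nonneg_left h1 hε1.le
    calc (1 + ε) * ((∑ i ∈ Finset.univ.erase j, w i j) * (o j - z j) ^ 2)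
        ≤ (1 + ε) * ((1 / (1 + ε)) * (w j j + ∑ i ∈ Finset.univ.erase j, w j i)
            * (o j - z j) ^ 2) := h2
      _ = (w j j + ∑ i ∈ Finset.univ.erase j, w j i) * (o j - z j) ^ 2 := by
          field_simp
  have hA0 : 0 ≤ ∑ i, w i i * (o i - s i) ^ 2 :=
    Finset.sum_nonneg fun i _ => mul_nonneg (hw i i) (sq_nonneg _)
  have hD0 : 0 ≤ ∑ i, ∑ j ∈ Finset.univ.erase i, w i j * (o i - o j) ^ 2 :=
    Finset.sum_nonneg fun i _ =>
      Finset.sum_nonneg fun j _ => mul_nonneg (hw i j) (sq_nonneg _)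
  have hRHS : ∑ i, opCost n w s i o
      = (∑ i, w i i * (o i - s i) ^ 2)
        + (∑ i, ∑ j ∈ Finset.univ.erase i, w i j * (o i - o j) ^ 2) := by
    unfold opCost
    rw [Finset.sum_add_distrib]
  have hinvA : 0 ≤ (1/ε) * ∑ i, w i i * (o i - s i) ^ 2 :=
    mul_nonneg (one_div_pos.mpr hε).le hA0
  rw [hRHS, expand]
  nlinarith [hX, hGB, hinvA]
end

section
/- Let ε > 0 and let (w_{ij}) be nonnegative weights satisfying Σ_{j≠i} w_{ji} ≤ (1/(1+ε))·(w_{ii} + Σ_{j≠i} w_{ij}) for every node i. Then for any pure Nash equilibrium z and any profile o of the associated opinion formation game, C(z) ≤ (1 + 1/ε)·C(o); i.e., the price of anarchy is at most 1 + 1/ε. -/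
lemma quad_coeff_zero (a c : ℝ) (ha : 0 ≤ a) (h : ∀ u : ℝ, 0 ≤ a * u ^ 2 + c * u) :
    c = 0 := by
  have ha1 : (0:ℝ) < a + 1 := by linarith
  have h1 := h (-(c / (a + 1)))
  have e : a * (-(c / (a + 1))) ^ 2 + c * (-(c / (a + 1))) = -(c ^ 2) / (a + 1) ^ 2 := by
    field_simp
    ring
  rw [e, le_div_iff₀ (by positivity)] at h1
  have hc2 : c ^ 2 ≤ 0 := by nlinarith
  have := sq_nonneg c
  have : c ^ 2 = 0 := le_antisymm hc2 (sq_nonneg c)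
  exact pow_eq_zero_iff (by norm_num) |>.mp this

lemma swap_erase_sum (n : ℕ) (g : Fin n → Fin n → ℝ) :
    ∑ i, ∑ j ∈ Finset.univ.erase i, g i j = ∑ j, ∑ i ∈ Finset.univ.erase j, g i j := by
  simp_rw [Finset.sum_erase_eq_sub (Finset.mem_univ _), Finset.sum_sub_distrib]
  rw [Finset.sum_comm]

theorem poa_bound (n : ℕ) (w : Fin n → Fin n → ℝ)
    (hw : ∀ i j, 0 ≤ w i j) (ε : ℝ) (hε : 0 < ε)
    (hcond : ∀ i : Fin n, ∑ j ∈ Finset.univ.erase i, w j i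
        ≤ (1 / (1 + ε)) * (w i i + ∑ j ∈ Finset.univ.erase i, w i j))
    (s z o : Fin n → ℝ)
    (hnash : ∀ i : Fin n, ∀ t : ℝ,
      opCost n w s i z ≤ opCost n w s i (Function.update z i t)) :
    ∑ i, opCost n w s i z ≤ (1 + 1 / ε) * ∑ i, opCost n w s i o := by
  set D : Fin n → ℝ := fun i => w i i + ∑ j ∈ Finset.univ.erase i, w i j with hDdef
  have hDnn : ∀ i, 0 ≤ D i := fun i =>
    add_nonneg (hw i i) (Finset.sum_nonneg fun j _ => hw i j)
  -- expansion of cost of a deviation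
  have hupdate : ∀ (i : Fin n) (t : ℝ), opCost n w s i (Function.update z i t)
      = w i i * (t - s i) ^ 2 + ∑ j ∈ Finset.univ.erase i, w i j * (t - z j) ^ 2 := by
    intro i t
    simp only [opCost, Function.update_self]
    congr 1
    refine Finset.sum_congr rfl fun j hj => ?_
    rw [Function.update_of_ne (Finset.ne_of_mem_erase hj)]
  have hexp : ∀ (i : Fin n) (t : ℝ), opCost n w s i (Function.update z i t)
      = opCost n w s i z + D i * (t - z i) ^ 2
        + (2 * (w i i * (z i - s i) + ∑ j ∈ Finset.univ.erase i, w i j * (z i - z j)))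
            * (t - z i) := by
    intro i t
    rw [hupdate]
    simp only [opCost, hDdef]
    have hs : ∑ j ∈ Finset.univ.erase i, w i j * (t - z j) ^ 2
        = (∑ j ∈ Finset.univ.erase i, w i j * (z i - z j) ^ 2)
          + (∑ j ∈ Finset.univ.erase i, w i j) * (t - z i) ^ 2
          + (∑ j ∈ Finset.univ.erase i, w i j * (z i - z j)) * (2 * (t - z i)) := by
      rw [Finset.sum_mul, Finset.sum_mul, ← Finset.sum_add_distrib, ← Finset.sum_add_distrib]
      exact Finset.sum_congr rfl fun j _ => by ring
    rw [hs]
    ring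
  -- at Nash the linear coefficient vanishes
  have hc0 : ∀ i : Fin n,
      2 * (w i i * (z i - s i) + ∑ j ∈ Finset.univ.erase i, w i j * (z i - z j)) = 0 := by
    intro i
    apply quad_coeff_zero (D i) _ (hDnn i)
    intro u
    have h2 := hnash i (z i + u)
    rw [hexp i (z i + u)] at h2
    have hu : z i + u - z i = u := by ring
    rw [hu] at h2
    linarith
  have heq : ∀ (i : Fin n) (t : ℝ), opCost n w s i (Function.update z i t)
      = opCost n w s i z + D i * (t - z i) ^ 2 := by
    intro i t
    rw [hexp, hc0 i]
    ring
  -- key identity at the profile o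
  have key : ∀ i : Fin n, opCost n w s i z + D i * (o i - z i) ^ 2
      = w i i * (o i - s i) ^ 2 + ∑ j ∈ Finset.univ.erase i, w i j * (o i - z j) ^ 2 := by
    intro i
    rw [← heq i (o i), hupdate]
  -- pointwise smoothness inequality
  have hab : ∀ a b : ℝ, (a + b) ^ 2 ≤ (1 + 1 / ε) * a ^ 2 + (1 + ε) * b ^ 2 := by
    intro a b
    have hinv : ε * (1 / ε) = 1 := mul_one_div_cancel hε.ne'
    nlinarith [sq_nonneg (a - ε * b), hε, sq_nonneg a, sq_nonneg b]
  have step1 : ∀ i : Fin n,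
      opCost n w s i z + D i * (o i - z i) ^ 2
        ≤ (1 + 1 / ε) * opCost n w s i o
          + (1 + ε) * ∑ j ∈ Finset.univ.erase i, w i j * (o j - z j) ^ 2 := by
    intro i
    rw [key i]
    have h1 : w i i * (o i - s i) ^ 2 ≤ (1 + 1 / ε) * (w i i * (o i - s i) ^ 2) := by
      nlinarith [mul_nonneg (hw i i) (sq_nonneg (o i - s i)), hε,
        mul_one_div_cancel hε.ne']
    have h2 : ∑ j ∈ Finset.univ.erase i, w i j * (o i - z j) ^ 2
        ≤ ∑ j ∈ Finset.univ.erase i,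
            ((1 + 1 / ε) * (w i j * (o i - o j) ^ 2) + (1 + ε) * (w i j * (o j - z j) ^ 2)) := by
      refine Finset.sum_le_sum fun j _ => ?_
      have := hab (o i - o j) (o j - z j)
      have habs : o i - o j + (o j - z j) = o i - z j := by ring
      rw [habs] at this
      nlinarith [hw i j, this]
    simp only [opCost]
    rw [mul_add, Finset.mul_sum, Finset.mul_sum, Finset.sum_add_distrib] at *
    linarith [h1, h2]
  have sum1 : ∑ i, opCost n w s i z + ∑ i, D i * (o i - z i) ^ 2
      ≤ (1 + 1 / ε) * ∑ i, opCost n w s i o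
        + (1 + ε) * ∑ i, ∑ j ∈ Finset.univ.erase i, w i j * (o j - z j) ^ 2 := by
    have h := Finset.sum_le_sum fun i (_ : i ∈ Finset.univ) => step1 i
    rw [Finset.sum_add_distrib, Finset.sum_add_distrib, ← Finset.mul_sum, ← Finset.mul_sum] at h
    exact h
  -- swap the double sum and apply the weight condition
  have hswap : ∑ i, ∑ j ∈ Finset.univ.erase i, w i j * (o j - z j) ^ 2
      = ∑ j, (o j - z j) ^ 2 * ∑ i ∈ Finset.univ.erase j, w i j := by
    rw [swap_erase_sum n (fun i j => w i j * (o j - z j) ^ 2)]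
    refine Finset.sum_congr rfl fun j _ => ?_
    rw [Finset.mul_sum]
    refine Finset.sum_congr rfl fun i _ => ?_
    ring
  have step2 : (1 + ε) * ∑ i, ∑ j ∈ Finset.univ.erase i, w i j * (o j - z j) ^ 2
      ≤ ∑ j, D j * (o j - z j) ^ 2 := by
    rw [hswap, Finset.mul_sum]
    refine Finset.sum_le_sum fun j _ => ?_
    have hc := hcond j
    have hnn : 0 ≤ (1 + ε) * (o j - z j) ^ 2 := by positivity
    have := mul_le_mul_of_nonneg_left hc hnn
    have h1e : (1 + ε) * (1 / (1 + ε)) = 1 := mul_one_div_cancel (by linarith)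
    calc (1 + ε) * ((o j - z j) ^ 2 * ∑ i ∈ Finset.univ.erase j, w i j)
        = (1 + ε) * (o j - z j) ^ 2 * ∑ i ∈ Finset.univ.erase j, w i j := by ring
      _ ≤ (1 + ε) * (o j - z j) ^ 2 * ((1 / (1 + ε)) * (w j j + ∑ i ∈ Finset.univ.erase j, w j i)) := this
      _ = D j * (o j - z j) ^ 2 := by
          rw [hDdef]
          field_simp
  linarith [sum1, step2]
end

section
/- Fix p > 1 and L ≥ 1 and consider the directed path (tree with all in-degrees 1) with nodes 0,1,...,L, where node 0 has self-loop weight √p and internal opinion 1, each node i ≥ 1 has self-loop weight √p − 1, internal opinion 0, and a single edge of weight 1 to node i−1. Then the profile z with z_i = p^{−i/2} is a Nash equilibrium of the opinion formation game. -/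
/-- Weights of the directed path on nodes `0, 1, ..., L`: node `0` has self-loop
weight `√p`, each node `i ≥ 1` has self-loop weight `√p - 1` and an edge of
weight `1` to node `i - 1`. -/
noncomputable def pathW (p : ℝ) (L : ℕ) (i j : Fin (L + 1)) : ℝ :=
  if j = i then (if i.val = 0 then Real.sqrt p else Real.sqrt p - 1)
  else if j.val + 1 = i.val then 1 else 0

/-- Internal opinions: node `0` has opinion `1`, all other nodes have opinion `0`. -/
def pathS (L : ℕ) (i : Fin (L + 1)) : ℝ := if i.val = 0 then 1 else 0

lemma eraseSumZero (p : ℝ) (L : ℕ) (i : Fin (L + 1)) (hi : i.val = 0)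
    (g : Fin (L + 1) → ℝ) :
    ∑ j ∈ Finset.univ.erase i, pathW p L i j * g j = 0 := by
  apply Finset.sum_eq_zero
  intro j hj
  have hji : j ≠ i := (Finset.mem_erase.1 hj).1
  have : pathW p L i j = 0 := by
    simp only [pathW, if_neg hji]
    rw [if_neg]; omega
  rw [this, zero_mul]

lemma eraseSumSucc (p : ℝ) (L : ℕ) (i : Fin (L + 1)) (hi : i.val ≠ 0)
    (g : Fin (L + 1) → ℝ) :
    ∑ j ∈ Finset.univ.erase i, pathW p L i j * g j
      = g ⟨i.val - 1, Nat.lt_of_le_of_lt (Nat.sub_le _ _) i.isLt⟩ := by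
  set m : Fin (L + 1) := ⟨i.val - 1, Nat.lt_of_le_of_lt (Nat.sub_le _ _) i.isLt⟩ with hm
  have hmi : m ≠ i := by
    intro h
    have := congrArg Fin.val h
    simp only [hm] at this
    omega
  rw [Finset.sum_eq_single_of_mem m (Finset.mem_erase.2 ⟨hmi, Finset.mem_univ _⟩)]
  · have h1 : pathW p L i m = 1 := by
      simp only [pathW, if_neg hmi]
      rw [if_pos]
      show m.val + 1 = i.val
      simp only [hm]; omega
    rw [h1, one_mul]
  · intro j hj hjm
    have hji : j ≠ i := (Finset.mem_erase.1 hj).1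
    have h0 : pathW p L i j = 0 := by
      simp only [pathW, if_neg hji]
      rw [if_neg]
      intro h
      exact hjm (Fin.ext (by simp only [hm]; omega))
    rw [h0, zero_mul]

theorem path_nash (p : ℝ) (hp : 1 < p) (L : ℕ) (hL : 1 ≤ L) :
    ∀ i : Fin (L + 1), ∀ t : ℝ,
      opCost (L + 1) (pathW p L) (pathS L) i (fun k => p ^ (-(k.val : ℝ) / 2))
        ≤ opCost (L + 1) (pathW p L) (pathS L) i
            (Function.update (fun k => p ^ (-(k.val : ℝ) / 2)) i t) := by
  intro i t
  have hp0 : 0 < p := lt_trans one_pos hp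
  set z : Fin (L + 1) → ℝ := fun k => p ^ (-(k.val : ℝ) / 2) with hz
  have hupd_i : Function.update z i t i = t := Function.update_self i t z
  have hupd : ∀ j : Fin (L + 1), j ≠ i → Function.update z i t j = z j :=
    fun j hj => Function.update_of_ne hj t z
  unfold opCost
  rw [hupd_i]
  have hcong : ∀ x : ℝ,
      ∑ j ∈ Finset.univ.erase i, pathW p L i j * (x - Function.update z i t j) ^ 2
        = ∑ j ∈ Finset.univ.erase i, pathW p L i j * (x - z j) ^ 2 := by
    intro x
    apply Finset.sum_congr rfl
    intro j hj
    rw [hupd j (Finset.mem_erase.1 hj).1]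
  rw [hcong]
  by_cases hi : i.val = 0
  · rw [eraseSumZero p L i hi, eraseSumZero p L i hi]
    have hzi : z i = 1 := by
      simp only [hz, hi]
      norm_num
    have hwi : pathW p L i i = Real.sqrt p := by
      simp [pathW, hi]
    have hsi : pathS L i = 1 := if_pos hi
    rw [hzi, hwi, hsi]
    have h1 : Real.sqrt p * (1 - 1) ^ 2 = 0 := by ring
    rw [h1]
    nlinarith [mul_nonneg (Real.sqrt_nonneg p) (sq_nonneg (t - 1))]
  · rw [eraseSumSucc p L i hi, eraseSumSucc p L i hi]
    set m : Fin (L + 1) := ⟨i.val - 1, Nat.lt_of_le_of_lt (Nat.sub_le _ _) i.isLt⟩ with hm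
    have hwi : pathW p L i i = Real.sqrt p - 1 := by
      simp [pathW, hi]
    have hsi : pathS L i = 0 := if_neg hi
    have hzm : z m = Real.sqrt p * z i := by
      simp only [hz, hm]
      rw [Real.sqrt_eq_rpow, ← Real.rpow_add hp0]
      congr 1
      have h1 : (1 : ℕ) ≤ i.val := Nat.one_le_iff_ne_zero.2 hi
      rw [Nat.cast_sub h1]
      push_cast
      ring
    rw [hwi, hsi, hzm]
    nlinarith [mul_nonneg (Real.sqrt_nonneg p) (sq_nonneg (t - z i)), sq_nonneg (t - z i)]
end

section
/- For the directed path game of the tree example with p > 1 and L levels, the price of anarchy is at least (p − √p)·L / √p, which tends to infinity as L → ∞; in particular the price of anarchy over all directed weighted graphs satisfying w_{ii} > 0 for all i is unbounded. -/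
namespace PoAAux

variable (q : ℝ) (L : ℕ)

/-- Weights of the scaled directed path. -/
noncomputable def pw : Fin (L+1) → Fin (L+1) → ℝ := fun i j =>
  if i.val = 0 then (if j.val = 0 then q else 0)
  else if j.val = i.val then (q-1) * q^(2*i.val)
  else if j.val + 1 = i.val then q^(2*i.val) else 0

noncomputable def ps : Fin (L+1) → ℝ := fun i => if i.val = 0 then 1 else 0

noncomputable def pz : Fin (L+1) → ℝ := fun i => (q⁻¹)^(i.val)

lemma key_sum (i : Fin (L+1)) (x : ℝ) :
    ∑ j ∈ Finset.univ.erase i, pw q L i j * (x - pz q L j) ^ 2 =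
      if i.val = 0 then 0 else q^(2*i.val) * (x - (q⁻¹)^(i.val - 1))^2 := by
  by_cases h : i.val = 0
  · rw [if_pos h]
    apply Finset.sum_eq_zero
    intro j hj
    have hji := Finset.ne_of_mem_erase hj
    have hj0 : ¬ j.val = 0 := fun hv => hji (Fin.ext (hv.trans h.symm))
    simp [pw, h, hj0]
  · rw [if_neg h]
    have hk : i.val - 1 < L + 1 := by omega
    set j0 : Fin (L+1) := ⟨i.val - 1, hk⟩ with hj0def
    have hmem : j0 ∈ Finset.univ.erase i := by
      refine Finset.mem_erase.mpr ⟨?_, Finset.mem_univ _⟩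
      intro he
      have := congrArg Fin.val he
      simp only [hj0def] at this
      omega
    rw [Finset.sum_eq_single_of_mem j0 hmem ?_]
    · have h1 : (j0 : Fin (L+1)).val = i.val - 1 := rfl
      simp only [pw, pz, h1]
      rw [if_neg h, if_neg (by omega), if_pos (by omega)]
    · intro b hb hbj0
      have hbi := Finset.ne_of_mem_erase hb
      have c1 : ¬ b.val = i.val := fun hc => hbi (Fin.ext hc)
      have c2 : ¬ b.val + 1 = i.val := fun hc => hbj0 (Fin.ext (by
        simp only [hj0def]; omega))
      simp [pw, h, c1, c2]

lemma nash (hq : 1 < q) (i : Fin (L+1)) (t : ℝ) :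
    opCost (L+1) (pw q L) (ps L) i (pz q L) ≤
      opCost (L+1) (pw q L) (ps L) i (Function.update (pz q L) i t) := by
  have hq0 : (0:ℝ) < q := lt_trans one_pos hq
  unfold opCost
  have hupd : ∀ j ∈ Finset.univ.erase i,
      pw q L i j * ((Function.update (pz q L) i t) i - (Function.update (pz q L) i t) j) ^ 2
        = pw q L i j * (t - pz q L j) ^ 2 := by
    intro j hj
    rw [Function.update_self, Function.update_of_ne (Finset.ne_of_mem_erase hj)]
  rw [Finset.sum_congr rfl hupd, Function.update_self,
    key_sum q L i t, key_sum q L i (pz q L i)]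
  by_cases h : i.val = 0
  · rw [if_pos h, if_pos h]
    have hz : pz q L i = 1 := by simp [pz, h]
    have hs : ps L i = 1 := by simp [ps, h]
    have hw0 : pw q L i i = q := by simp [pw, h]
    rw [hz, hs, hw0]
    nlinarith [sq_nonneg (t - 1)]
  · rw [if_neg h, if_neg h]
    have hs : ps L i = 0 := by simp [ps, h]
    have hw : pw q L i i = (q-1) * q^(2*i.val) := by simp [pw, h]
    have hc : (q⁻¹ : ℝ)^(i.val - 1) = q * pz q L i := by
      obtain ⟨m, hm⟩ : ∃ m, i.val = m + 1 := ⟨i.val - 1, by omega⟩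
      simp only [pz, hm, Nat.add_sub_cancel, pow_succ]
      rw [mul_comm q, mul_assoc, inv_mul_cancel₀ (ne_of_gt hq0), mul_one]
    rw [hs, hw, hc]
    have hp : (0:ℝ) < q^(2*i.val) := pow_pos hq0 _
    nlinarith [mul_nonneg (mul_nonneg (le_of_lt hp) (le_of_lt hq0))
      (sq_nonneg (t - pz q L i))]

lemma cost_o (hq : 1 < q) :
    ∑ i, opCost (L+1) (pw q L) (ps L) i (fun _ => 0) = q := by
  have h0 : ∀ i : Fin (L+1), opCost (L+1) (pw q L) (ps L) i (fun _ => 0)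
      = if i.val = 0 then q else 0 := by
    intro i
    by_cases h : i.val = 0 <;> simp [opCost, pw, ps, h]
  rw [Finset.sum_congr rfl (fun i _ => h0 i), Fin.sum_univ_succ]
  simp [Fin.val_succ]

lemma cost_z (hq : 1 < q) :
    ∑ i, opCost (L+1) (pw q L) (ps L) i (pz q L) = L * (q^2 - q) := by
  have hq0 : (0:ℝ) < q := lt_trans one_pos hq
  have hqne : q ≠ 0 := ne_of_gt hq0
  have h0 : ∀ i : Fin (L+1), opCost (L+1) (pw q L) (ps L) i (pz q L)
      = if i.val = 0 then 0 else q^2 - q := by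
    intro i
    unfold opCost
    rw [key_sum q L i (pz q L i)]
    by_cases h : i.val = 0
    · rw [if_pos h, if_pos h]
      simp [pw, ps, pz, h]
    · rw [if_neg h, if_neg h]
      have hs : ps L i = 0 := by simp [ps, h]
      have hw : pw q L i i = (q-1) * q^(2*i.val) := by simp [pw, h]
      obtain ⟨m, hm⟩ : ∃ m, i.val = m + 1 := ⟨i.val - 1, by omega⟩
      rw [hs, hw]
      simp only [pz, hm, Nat.add_sub_cancel, inv_pow]
      field_simp
      ring
  rw [Finset.sum_congr rfl (fun i _ => h0 i), Fin.sum_univ_succ]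
  simp [Fin.val_succ, Finset.sum_const, mul_comm]
  ring

lemma master (p : ℝ) (hp : 1 < p) (L : ℕ) (hL : 1 ≤ L) :
    ∃ (n : ℕ) (w : Fin n → Fin n → ℝ) (s z o : Fin n → ℝ),
      (∀ i j, 0 ≤ w i j) ∧ (∀ i, 0 < w i i) ∧
      (∀ i : Fin n, ∀ t : ℝ,
        opCost n w s i z ≤ opCost n w s i (Function.update z i t)) ∧
      0 < ∑ i, opCost n w s i o ∧
      ((p - Real.sqrt p) * L / Real.sqrt p) * ∑ i, opCost n w s i o
        ≤ ∑ i, opCost n w s i z := by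
  set q := Real.sqrt p with hqdef
  have hq : 1 < q := by
    rw [hqdef, show (1:ℝ) = Real.sqrt 1 by simp]
    exact Real.sqrt_lt_sqrt (by norm_num) hp
  have hq0 : (0:ℝ) < q := lt_trans one_pos hq
  have hpq : p = q^2 := (Real.sq_sqrt (by linarith)).symm
  refine ⟨L+1, pw q L, ps L, pz q L, fun _ => 0, ?_, ?_, nash q L hq, ?_, ?_⟩
  · intro i j
    unfold pw
    have := pow_pos hq0 (2*(i:ℕ))
    split_ifs <;> nlinarith
  · intro i
    have := pow_pos hq0 (2*(i:ℕ))
    by_cases h : i.val = 0 <;> simp [pw, h] <;> nlinarith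
  · rw [cost_o q L hq]; exact hq0
  · rw [cost_o q L hq, cost_z q L hq, hpq,
      div_mul_cancel₀ _ (ne_of_gt hq0)]
    exact le_of_eq (by ring)

end PoAAux

theorem poa_unbounded :
    (∀ p : ℝ, 1 < p → ∀ L : ℕ, 1 ≤ L →
      ∃ (n : ℕ) (w : Fin n → Fin n → ℝ) (s z o : Fin n → ℝ),
        (∀ i j, 0 ≤ w i j) ∧ (∀ i, 0 < w i i) ∧
        (∀ i : Fin n, ∀ t : ℝ,
          opCost n w s i z ≤ opCost n w s i (Function.update z i t)) ∧
        0 < ∑ i, opCost n w s i o ∧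
        ((p - Real.sqrt p) * L / Real.sqrt p) * ∑ i, opCost n w s i o
          ≤ ∑ i, opCost n w s i z) ∧
    ∀ M : ℝ, ∃ (n : ℕ) (w : Fin n → Fin n → ℝ) (s z o : Fin n → ℝ),
      (∀ i j, 0 ≤ w i j) ∧ (∀ i, 0 < w i i) ∧
      (∀ i : Fin n, ∀ t : ℝ,
        opCost n w s i z ≤ opCost n w s i (Function.update z i t)) ∧
      0 < ∑ i, opCost n w s i o ∧
      M * ∑ i, opCost n w s i o ≤ ∑ i, opCost n w s i z := by
  constructor
  · exact fun p hp L hL => PoAAux.master p hp L hL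
  · intro M
    set L : ℕ := max 1 ⌈M⌉₊ with hLdef
    obtain ⟨n, w, s, z, o, h1, h2, h3, h4, h5⟩ :=
      PoAAux.master 4 (by norm_num) L (le_max_left _ _)
    refine ⟨n, w, s, z, o, h1, h2, h3, h4, ?_⟩
    have hs4 : Real.sqrt 4 = 2 := by
      rw [show (4:ℝ) = 2^2 by norm_num, Real.sqrt_sq (by norm_num)]
    have hML : M ≤ (L : ℝ) := by
      calc M ≤ (⌈M⌉₊ : ℝ) := Nat.le_ceil M
        _ ≤ (L : ℝ) := by exact_mod_cast le_max_right 1 ⌈M⌉₊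
    have hrL : ((4 - Real.sqrt 4) * L / Real.sqrt 4) = (L : ℝ) := by
      rw [hs4]; ring
    rw [hrL] at h5
    calc M * ∑ i, opCost n w s i o
        ≤ (L : ℝ) * ∑ i, opCost n w s i o :=
          mul_le_mul_of_nonneg_right hML (le_of_lt h4)
      _ ≤ ∑ i, opCost n w s i z := h5
end
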